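/- Let S be a Cu-semigroup satisfying (O5), let (λ_j)_{j∈J} be a family of functionals on S, and let U be an ultrafilter on J. Define λ : S → [0,∞] by λ(x) = sup_{x' ≪ x} lim_{j→U} λ_j(x'), where lim_{j→U} denotes the limit along the ultrafilter U in the compact Hausdorff space [0,∞]. Then λ is a functional on S. -/

import Mathlib

open scoped ENNReal

section CuPreamble

variable {S : Type*} [AddCommMonoid S] [PartialOrder S]

/-- The way-below (compact containment) relation: `x ≪ y` if for every increasing
sequence with a supremum above `y`, some term dominates `x`. -/
def WayBelow (x y : S) : Prop :=
  ∀ (f : ℕ → S) (s : S), Monotone f → IsLUB (Set.range f) s → y ≤ s → ∃ n, x ≤ f n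

/-- A Cu-semigroup: a positively ordered commutative monoid satisfying (O1)-(O4). -/
structure IsCuSemigroup (S : Type*) [AddCommMonoid S] [PartialOrder S] : Prop where
  zero_le : ∀ x : S, 0 ≤ x
  add_le_add : ∀ ⦃a b c d : S⦄, a ≤ b → c ≤ d → a + c ≤ b + d
  O1 : ∀ f : ℕ → S, Monotone f → ∃ s : S, IsLUB (Set.range f) s
  O2 : ∀ x : S, ∃ f : ℕ → S, (∀ n, WayBelow (f n) (f (n + 1))) ∧ IsLUB (Set.range f) x
  O3 : ∀ ⦃x₁ x₂ y₁ y₂ : S⦄, WayBelow x₁ x₂ → WayBelow y₁ y₂ → WayBelow (x₁ + y₁) (x₂ + y₂)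
  O4 : ∀ (f g : ℕ → S) (s t : S), Monotone f → Monotone g → IsLUB (Set.range f) s →
    IsLUB (Set.range g) t → IsLUB (Set.range fun n => f n + g n) (s + t)

/-- The axiom (O5), including the strengthened form. -/
def SatisfiesO5 (S : Type*) [AddCommMonoid S] [PartialOrder S] : Prop :=
  (∀ x' x y : S, WayBelow x' x → x ≤ y → ∃ z : S, x' + z ≤ y ∧ y ≤ x + z) ∧
  (∀ x' x y w' w : S, WayBelow x' x → x + w ≤ y → WayBelow w' w →
    ∃ z : S, WayBelow w' z ∧ x' + z ≤ y ∧ y ≤ x + z)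

/-- The axiom (O6). -/
def SatisfiesO6 (S : Type*) [AddCommMonoid S] [PartialOrder S] : Prop :=
  ∀ x' x y z : S, WayBelow x' x → x ≤ y + z →
    ∃ y' z' : S, x' ≤ y' + z' ∧ y' ≤ y ∧ y' ≤ x ∧ z' ≤ z ∧ z' ≤ x

/-- A functional on a Cu-semigroup: a map to `[0,∞]` preserving order, addition, zero,
and suprema of increasing sequences. -/
structure IsFunctional (l : S → ℝ≥0∞) : Prop where
  mono : Monotone l
  map_zero : l 0 = 0
  map_add : ∀ x y : S, l (x + y) = l x + l y
  map_sup : ∀ (f : ℕ → S) (s : S), Monotone f → IsLUB (Set.range f) s → l s = ⨆ n, l (f n)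

/-- Edwards' condition. -/
def EdwardsCondition (S : Type*) [AddCommMonoid S] [PartialOrder S] : Prop :=
  ∀ l : S → ℝ≥0∞, IsFunctional l → ∀ x y : S,
    sInf {r : ℝ≥0∞ | ∃ l₁ l₂ : S → ℝ≥0∞, IsFunctional l₁ ∧ IsFunctional l₂ ∧
        (∀ s : S, l₁ s + l₂ s = l s) ∧ r = l₁ x + l₂ y} =
    sSup {r : ℝ≥0∞ | ∃ z : S, z ≤ x ∧ z ≤ y ∧ r = l z}

/-- A scale on a Cu-semigroup. -/
structure IsScale (Sg : Set S) : Prop where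
  hered : ∀ ⦃x y : S⦄, y ≤ x → x ∈ Sg → y ∈ Sg
  supClosed : ∀ (f : ℕ → S) (s : S), Monotone f → (∀ n, f n ∈ Sg) →
    IsLUB (Set.range f) s → s ∈ Sg
  generates : ∀ x' x : S, WayBelow x' x → ∃ L : List S, (∀ z ∈ L, z ∈ Sg) ∧ x' ≤ L.sum

/-- The `d`-fold amplification `Σ^{(d)}` of a scale. -/
def scaleAmp (Sg : Set S) : ℕ → Set S
  | 0 => {0}
  | d + 1 => {x : S | ∀ x' : S, WayBelow x' x →
      ∃ f : Fin (d + 1) → S, (∀ i, f i ∈ Sg) ∧ WayBelow x' (∑ i, f i)}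

end CuPreamble


section AuxProof

variable {S : Type*} [AddCommMonoid S] [PartialOrder S]

lemma wayBelow_le {x y : S} (h : WayBelow x y) : x ≤ y := by
  obtain ⟨n, hn⟩ := h (fun _ => y) y monotone_const
    (by rw [Set.range_const]; exact isLUB_singleton) le_rfl
  exact hn

lemma le_wayBelow {x y z : S} (h : x ≤ y) (h2 : WayBelow y z) : WayBelow x z :=
  fun f s hf hs hz => (h2 f s hf hs hz).imp fun _ hn => h.trans hn

lemma wayBelow_le' {x y z : S} (h : WayBelow x y) (h2 : y ≤ z) : WayBelow x z :=
  fun f s hf hs hz => h f s hf hs (h2.trans hz)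

lemma zero_wayBelow (hCu : IsCuSemigroup S) (x : S) : WayBelow (0 : S) x :=
  fun f _ _ _ _ => ⟨0, hCu.zero_le _⟩

lemma exists_wayBelow_of_wayBelow (hCu : IsCuSemigroup S) {z s : S} (hz : WayBelow z s)
    (f : ℕ → S) (hf : Monotone f) (hs : IsLUB (Set.range f) s) : ∃ n, WayBelow z (f n) := by
  obtain ⟨g, hg, hgs⟩ := hCu.O2 s
  have hgmono : Monotone g := monotone_nat_of_le_succ fun n => wayBelow_le (hg n)
  obtain ⟨k, hk⟩ := hz g s hgmono hgs le_rfl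
  obtain ⟨n, hn⟩ := hg (k + 1) f s hf hs (hgs.1 ⟨k + 2, rfl⟩)
  exact ⟨n, wayBelow_le' (le_wayBelow hk (hg k)) hn⟩

lemma ulim_tendsto {J : Type*} (U : Ultrafilter J) (g : J → ℝ≥0∞) :
    Filter.Tendsto g U (nhds (Ultrafilter.lim (U.map g))) := by
  have := Ultrafilter.le_nhds_lim (U.map g)
  rwa [Ultrafilter.coe_map] at this

lemma ulim_eq {J : Type*} (U : Ultrafilter J) {g : J → ℝ≥0∞} {a : ℝ≥0∞}
    (h : Filter.Tendsto g U (nhds a)) : Ultrafilter.lim (U.map g) = a :=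
  tendsto_nhds_unique (ulim_tendsto U g) h

end AuxProof

/-- The limit of a family of functionals along an ultrafilter,
`λ(x) = sup_{x' ≪ x} lim_{j→U} λ_j(x')`, is again a functional. -/
theorem stmt_14 {S : Type*} [AddCommMonoid S] [PartialOrder S] {J : Type*}
    (hCu : IsCuSemigroup S) (hO5 : SatisfiesO5 S)
    (lam : J → S → ℝ≥0∞) (hlam : ∀ j, IsFunctional (lam j)) (U : Ultrafilter J) :
    IsFunctional (fun x : S =>
      ⨆ (x' : S) (_ : WayBelow x' x), (U.map fun j => lam j x').lim) := by
  set mu : S → ℝ≥0∞ := fun x => (U.map fun j => lam j x).lim with hmu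
  have mu_mono : Monotone mu := fun x y hxy =>
    le_of_tendsto_of_tendsto' (ulim_tendsto U fun j => lam j x)
      (ulim_tendsto U fun j => lam j y) fun j => (hlam j).mono hxy
  have mu_add : ∀ x y : S, mu (x + y) = mu x + mu y := by
    intro x y
    have he : (fun j => lam j (x + y)) = fun j => lam j x + lam j y :=
      funext fun j => (hlam j).map_add x y
    have : Filter.Tendsto (fun j => lam j (x + y)) U (nhds (mu x + mu y)) := by
      rw [he]
      exact ((ulim_tendsto U fun j => lam j x).add (ulim_tendsto U fun j => lam j y))
    exact ulim_eq U this
  have mu_zero : mu 0 = 0 := by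
    have he : (fun j => lam j (0 : S)) = fun _ => (0 : ℝ≥0∞) :=
      funext fun j => (hlam j).map_zero
    exact ulim_eq U (by rw [he]; exact tendsto_const_nhds)
  have lmono : Monotone (fun x : S =>
      ⨆ (x' : S) (_ : WayBelow x' x), (U.map fun j => lam j x').lim) := by
    intro x y hxy
    exact iSup₂_le fun z hz => le_iSup₂_of_le z (wayBelow_le' hz hxy) le_rfl
  refine ⟨lmono, ?_, ?_, ?_⟩
  · refine le_antisymm (iSup₂_le fun z hz => ?_) zero_le
    have hz0 : z = 0 := le_antisymm (wayBelow_le hz) (hCu.zero_le z)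
    rw [hz0]
    exact mu_zero.le
  · intro x y
    refine le_antisymm (iSup₂_le fun z hz => ?_) ?_
    · obtain ⟨f, hf, hfx⟩ := hCu.O2 x
      obtain ⟨g, hg, hgy⟩ := hCu.O2 y
      have hfmono : Monotone f := monotone_nat_of_le_succ fun n => wayBelow_le (hf n)
      have hgmono : Monotone g := monotone_nat_of_le_succ fun n => wayBelow_le (hg n)
      have hsum : IsLUB (Set.range fun n => f n + g n) (x + y) :=
        hCu.O4 f g x y hfmono hgmono hfx hgy
      obtain ⟨n, hn⟩ := hz (fun n => f n + g n) (x + y)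
        (fun a b hab => hCu.add_le_add (hfmono hab) (hgmono hab)) hsum le_rfl
      have h1 : mu z ≤ mu (f n) + mu (g n) := by
        rw [← mu_add]; exact mu_mono hn
      refine h1.trans (add_le_add ?_ ?_)
      · exact le_iSup₂_of_le (f n) (wayBelow_le' (hf n) (hfx.1 ⟨n + 1, rfl⟩)) le_rfl
      · exact le_iSup₂_of_le (g n) (wayBelow_le' (hg n) (hgy.1 ⟨n + 1, rfl⟩)) le_rfl
    · refine ENNReal.biSup_add_biSup_le' (p := fun x' => WayBelow x' x)
        (q := fun y' => WayBelow y' y) (f := fun x' => mu x') (g := fun y' => mu y')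
        ⟨(0 : S), zero_wayBelow hCu x⟩ ⟨(0 : S), zero_wayBelow hCu y⟩
        fun x' hx' y' hy' => ?_
      have : mu x' + mu y' = mu (x' + y') := (mu_add x' y').symm
      rw [this]
      exact le_iSup₂_of_le (x' + y') (hCu.O3 hx' hy') le_rfl
  · intro f s hf hs
    refine le_antisymm (iSup₂_le fun z hz => ?_) (iSup_le fun n => lmono (hs.1 ⟨n, rfl⟩))
    obtain ⟨n, hn⟩ := exists_wayBelow_of_wayBelow hCu hz f hf hs
    exact le_iSup_of_le n (le_iSup₂_of_le z hn le_rfl)
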